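/- Let B be a complex unital Banach algebra with submultiplicative norm, let A, S ∈ B with S² = A, and let Y ∈ B with ‖Y‖ ≤ 1. Define X = S · Σ_{j=0}^{∞} (d_j/j!)(−Y)^j (the series converges absolutely). Then ‖S‖ ≥ max( √‖A‖ , ‖X‖ / (2 − √(1 − ‖Y‖)) ). -/

import Mathlib

/-- `d_j = ∏_{i=0}^{j-1} (1/2 - i)`, so that `d_j / j!` are the Taylor
coefficients of `y ↦ (1 + y)^{1/2}` at `0`. -/
noncomputable def dcoef (j : ℕ) : ℝ := ∏ i ∈ Finset.range j, ((1 : ℝ) / 2 - i)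


noncomputable def acoef (j : ℕ) : ℝ := |dcoef j| / j.factorial

lemma dcoef_succ (j : ℕ) : dcoef (j + 1) = dcoef j * ((1 : ℝ) / 2 - j) :=
  Finset.prod_range_succ _ _

lemma acoef_zero : acoef 0 = 1 := by simp [acoef, dcoef]

lemma acoef_nonneg (j : ℕ) : 0 ≤ acoef j := by
  have : (0:ℝ) < j.factorial := by positivity
  exact div_nonneg (abs_nonneg _) this.le

lemma cat_id (j : ℕ) : (j + 2) * catalan (j + 1) = (4 * j + 2) * catalan j := by
  have h1 := Nat.succ_mul_centralBinom_succ j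
  have h2 := succ_mul_catalan_eq_centralBinom j
  have h3 := succ_mul_catalan_eq_centralBinom (j + 1)
  apply Nat.eq_of_mul_eq_mul_left (show 0 < j + 1 by omega)
  calc (j+1) * ((j+2) * catalan (j+1)) = (j+1) * ((j+1+1) * catalan (j+1)) := by ring_nf
    _ = (j+1) * Nat.centralBinom (j+1) := by rw [h3]
    _ = 2 * (2*j+1) * Nat.centralBinom j := h1
    _ = 2 * (2*j+1) * ((j+1) * catalan j) := by rw [h2]
    _ = (j+1) * ((4*j+2) * catalan j) := by ring

lemma acoef_succ_eq (j : ℕ) : acoef (j + 1) = (catalan j : ℝ) / (2 * 4 ^ j) := by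
  induction j with
  | zero => simp [acoef, dcoef]
  | succ j ih =>
    have hd : |dcoef (j + 2)| = |dcoef (j + 1)| * ((j : ℝ) + 1 / 2) := by
      rw [dcoef_succ (j + 1), abs_mul]
      congr 1
      rw [abs_of_nonpos (by push_cast; linarith)]
      push_cast; ring
    have hstep : acoef (j + 2) = acoef (j + 1) * ((j : ℝ) + 1 / 2) / ((j : ℝ) + 2) := by
      have hfac : ((j + 2).factorial : ℝ) = ((j : ℝ) + 2) * (j + 1).factorial := by
        rw [show j + 2 = (j + 1) + 1 from rfl, Nat.factorial_succ]
        push_cast; ring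
      have h1 : (0:ℝ) < (j + 1).factorial := by positivity
      rw [acoef, acoef, hd, hfac]
      field_simp
    have hcat : ((j : ℝ) + 2) * catalan (j + 1) = (4 * (j : ℝ) + 2) * catalan j := by
      exact_mod_cast congrArg (Nat.cast (R := ℝ)) (cat_id j)
    rw [hstep, ih]
    have h4 : (0:ℝ) < 4 ^ j := by positivity
    field_simp
    linear_combination (-2 * (4:ℝ) ^ j) * hcat

lemma cb_id (n : ℕ) : ((n:ℝ) + 1) * Nat.centralBinom (n + 1) = (4 * n + 2) * Nat.centralBinom n := by
  have h : ((n + 1 : ℕ) : ℝ) * ((n+1).centralBinom : ℝ) = ((2*(2*n+1) : ℕ) : ℝ) * (n.centralBinom : ℝ) := by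
    exact_mod_cast congrArg (Nat.cast (R := ℝ)) (Nat.succ_mul_centralBinom_succ n)
  push_cast at h
  linarith

lemma cat_cb (n : ℕ) : ((n:ℝ) + 1) * catalan n = Nat.centralBinom n := by
  exact_mod_cast congrArg (Nat.cast (R := ℝ)) (succ_mul_catalan_eq_centralBinom n)

lemma sum_acoef (n : ℕ) :
    ∑ j ∈ Finset.range (n + 1), acoef j = 2 - (Nat.centralBinom n : ℝ) / 4 ^ n := by
  induction n with
  | zero => simp [acoef_zero, Nat.centralBinom_zero]; norm_num
  | succ n ih =>
    rw [Finset.sum_range_succ, ih, acoef_succ_eq]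
    have h1 := cb_id n
    have h2 := cat_cb n
    have h4 : (0:ℝ) < 4 ^ n := by positivity
    have hn : (0:ℝ) < (n:ℝ) + 1 := by positivity
    have key2 : ((n:ℝ)+1) * ((catalan n : ℝ) * 4 - (Nat.centralBinom n : ℝ) * 8 + (Nat.centralBinom (n+1) : ℝ) * 2) = 0 := by
      linear_combination 4 * h2 + 2 * h1
    have key3 : (catalan n : ℝ) = 2 * (Nat.centralBinom n : ℝ) - (Nat.centralBinom (n+1) : ℝ) / 2 := by
      rcases mul_eq_zero.mp key2 with h | h
      · exact absurd h hn.ne'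
      · linarith
    have key : (catalan n : ℝ) / (2 * 4 ^ n)
        = (Nat.centralBinom n : ℝ) / 4 ^ n - (Nat.centralBinom (n+1) : ℝ) / 4 ^ (n+1) := by
      rw [key3, pow_succ]
      field_simp
      ring
    rw [key]
    ring

lemma sum_acoef_le (n : ℕ) : ∑ j ∈ Finset.range n, acoef j ≤ 2 := by
  cases n with
  | zero => simp
  | succ n =>
    rw [sum_acoef]
    have : (0:ℝ) ≤ (Nat.centralBinom n : ℝ) / 4 ^ n := by positivity
    linarith

lemma conv (m : ℕ) :
    ∑ p ∈ Finset.HasAntidiagonal.antidiagonal (m + 2), acoef p.1 * acoef p.2 = 4 * acoef (m + 2) := by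
  rw [Finset.Nat.sum_antidiagonal_eq_sum_range_succ (fun x y => acoef x * acoef y)]
  rw [Finset.sum_range_succ', Finset.sum_range_succ]
  have hmid : ∀ k ∈ Finset.range (m + 1),
      acoef (k + 1) * acoef (m + 2 - (k + 1)) =
        (catalan k : ℝ) * catalan (m - k) / (4 * 4 ^ m) := by
    intro k hk
    have hk' : k ≤ m := Nat.lt_succ_iff.mp (Finset.mem_range.mp hk)
    have hmk : m + 2 - (k + 1) = (m - k) + 1 := by omega
    have h3 : (4:ℝ) ^ k * 4 ^ (m - k) = 4 ^ m := by
      rw [← pow_add]; congr 1; omega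
    have hden : (2 * (4:ℝ) ^ k) * (2 * 4 ^ (m - k)) = 4 * 4 ^ m := by
      rw [← h3]; ring
    rw [hmk, acoef_succ_eq, acoef_succ_eq, div_mul_div_comm, hden]
  rw [Finset.sum_congr rfl hmid, ← Finset.sum_div]
  have hcatsum : ∑ k ∈ Finset.range (m + 1), (catalan k : ℝ) * catalan (m - k)
      = catalan (m + 1) := by
    rw [catalan_succ' m, Finset.Nat.sum_antidiagonal_eq_sum_range_succ
      (fun x y => catalan x * catalan y)]
    push_cast
    rfl
  rw [hcatsum]
  have e2 : acoef (m + 2) = (catalan (m + 1) : ℝ) / (2 * 4 ^ (m + 1)) := acoef_succ_eq (m + 1)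
  have e0 : m + 2 - (m + 1 + 1) = 0 := by omega
  simp only [e0, Nat.sub_zero, acoef_zero, show m + 1 + 1 = m + 2 from rfl, e2, pow_succ]
  have h4 : (0:ℝ) < 4 ^ m := by positivity
  field_simp
  ring


set_option maxHeartbeats 1600000 in
/-- Lemma 7 of the paper: if `S² = A`, `‖Y‖ ≤ 1` and
`X = S · Σ_j (d_j/j!)(-Y)^j` (the series converges absolutely), then
`‖S‖ ≥ max(√‖A‖, ‖X‖/(2 - √(1 - ‖Y‖)))`. -/
theorem norm_sqrt_lower_bound {B : Type*} [NormedRing B]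
    [NormedAlgebra ℂ B] [CompleteSpace B]
    (A S Y : B) (hS : S ^ 2 = A) (hY : ‖Y‖ ≤ 1)
    (X : B)
    (hX : X = S * ∑' j : ℕ, ((dcoef j / (j.factorial : ℝ) : ℝ) : ℂ) • (-Y) ^ j) :
    Summable (fun j : ℕ => ‖((dcoef j / (j.factorial : ℝ) : ℝ) : ℂ) • (-Y) ^ j‖) ∧
    max (Real.sqrt ‖A‖) (‖X‖ / (2 - Real.sqrt (1 - ‖Y‖))) ≤ ‖S‖ := by
  set t : ℝ := ‖Y‖ with htdef
  have ht0 : 0 ≤ t := norm_nonneg Y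
  have habs : ∀ j : ℕ, ‖((dcoef j / (j.factorial : ℝ) : ℝ) : ℂ)‖ = acoef j := by
    intro j
    rw [Complex.norm_real, Real.norm_eq_abs, abs_div, Nat.abs_cast]
    rfl
  have ha1 : acoef 1 = 1 / 2 := by
    simp [acoef, dcoef]
  -- summability of the scalar majorant
  have hnn : ∀ j : ℕ, 0 ≤ acoef j * t ^ j :=
    fun j => mul_nonneg (acoef_nonneg j) (pow_nonneg ht0 j)
  have hbnd : ∀ n : ℕ, ∑ j ∈ Finset.range n, acoef j * t ^ j ≤ 2 := by
    intro n
    calc ∑ j ∈ Finset.range n, acoef j * t ^ j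
        ≤ ∑ j ∈ Finset.range n, acoef j := by
          refine Finset.sum_le_sum fun j _ => ?_
          have h1 : t ^ j ≤ 1 := pow_le_one₀ ht0 hY
          have := acoef_nonneg j
          nlinarith
      _ ≤ 2 := sum_acoef_le n
  have hsum_t : Summable fun j => acoef j * t ^ j :=
    summable_of_sum_range_le hnn hbnd
  set P : ℝ := ∑' j, acoef j * t ^ j with hPdef
  have hP_le : P ≤ 2 := Real.tsum_le_of_sum_range_le hnn hbnd
  -- Cauchy product identity
  have hnorm : Summable fun j => ‖acoef j * t ^ j‖ := by
    simpa only [Real.norm_eq_abs, abs_of_nonneg (hnn _)] using hsum_t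
  have hprod := tsum_mul_tsum_eq_tsum_sum_antidiagonal_of_summable_norm hnorm hnorm
  have hinner : ∀ n : ℕ,
      (∑ kl ∈ Finset.HasAntidiagonal.antidiagonal n, (acoef kl.1 * t ^ kl.1) * (acoef kl.2 * t ^ kl.2))
        = (∑ kl ∈ Finset.HasAntidiagonal.antidiagonal n, acoef kl.1 * acoef kl.2) * t ^ n := by
    intro n
    rw [Finset.sum_mul]
    refine Finset.sum_congr rfl fun p hp => ?_
    have hpn : p.1 + p.2 = n := Finset.HasAntidiagonal.mem_antidiagonal.mp hp
    rw [← hpn, pow_add]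
    ring
  have hwsum : Summable fun n =>
      (∑ kl ∈ Finset.HasAntidiagonal.antidiagonal n, acoef kl.1 * acoef kl.2) * t ^ n := by
    have := (summable_norm_sum_mul_antidiagonal_of_summable_norm hnorm hnorm).of_norm
    exact this.congr hinner
  have hPP : P * P = ∑' n,
      (∑ kl ∈ Finset.HasAntidiagonal.antidiagonal n, acoef kl.1 * acoef kl.2) * t ^ n := by
    rw [hPdef, hprod]
    exact tsum_congr hinner
  -- split off first two terms of both series
  set R : ℝ := ∑' n, acoef (n + 2) * t ^ (n + 2) with hRdef
  have hshift1 : Summable fun n => acoef (n + 1) * t ^ (n + 1) :=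
    (summable_nat_add_iff 1).mpr hsum_t
  have hshift2 : Summable fun n => acoef (n + 2) * t ^ (n + 2) :=
    (summable_nat_add_iff 2).mpr hsum_t
  have hPsplit : P = 1 + (acoef 1 * t + R) := by
    rw [hPdef, Summable.tsum_eq_zero_add hsum_t, Summable.tsum_eq_zero_add hshift1]
    rw [acoef_zero, pow_zero, pow_one, hRdef]
    norm_num
  have hw0 : (∑ kl ∈ Finset.HasAntidiagonal.antidiagonal 0, acoef kl.1 * acoef kl.2) * t ^ 0 = 1 := by
    simp [acoef_zero]
  have hw1 : (∑ kl ∈ Finset.HasAntidiagonal.antidiagonal 1, acoef kl.1 * acoef kl.2) * t ^ 1 = t := by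
    have hset : Finset.HasAntidiagonal.antidiagonal 1 = {((0:ℕ),(1:ℕ)), (1,0)} := by decide
    rw [hset, Finset.sum_pair (by decide)]
    rw [acoef_zero, ha1, pow_one]
    ring
  have hwshift1 : Summable fun n =>
      (∑ kl ∈ Finset.HasAntidiagonal.antidiagonal (n + 1), acoef kl.1 * acoef kl.2) * t ^ (n + 1) :=
    (summable_nat_add_iff 1).mpr hwsum
  have hPPval : P * P = 4 * P - 3 - t := by
    rw [hPP, Summable.tsum_eq_zero_add hwsum, Summable.tsum_eq_zero_add hwshift1]
    have : ∀ n : ℕ, (∑ kl ∈ Finset.HasAntidiagonal.antidiagonal (n + 1 + 1), acoef kl.1 * acoef kl.2)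
        * t ^ (n + 1 + 1) = 4 * (acoef (n + 2) * t ^ (n + 2)) := by
      intro n
      rw [show n + 1 + 1 = n + 2 from rfl, conv n]
      ring
    rw [tsum_congr this, tsum_mul_left, hw0, hw1, ← hRdef]
    rw [hPsplit, ha1]
    ring
  have h2P : 0 ≤ 2 - P := by linarith
  have hsqrt : Real.sqrt (1 - t) = 2 - P := by
    rw [show (1:ℝ) - t = (2 - P) ^ 2 by nlinarith]
    exact Real.sqrt_sq h2P
  -- vector bounds
  have hbound : ∀ j : ℕ, ‖((dcoef j / (j.factorial : ℝ) : ℝ) : ℂ) • (-Y) ^ j‖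
      ≤ (acoef j * t ^ j) * max 1 ‖(1 : B)‖ := by
    intro j
    rw [norm_smul, habs]
    cases j with
    | zero =>
      rw [pow_zero, acoef_zero, pow_zero]
      simpa using le_max_right (1:ℝ) ‖(1:B)‖
    | succ k =>
      have h1 : ‖(-Y) ^ (k + 1)‖ ≤ t ^ (k + 1) := by
        calc ‖(-Y) ^ (k + 1)‖ ≤ ‖-Y‖ ^ (k + 1) := norm_pow_le' (-Y) (Nat.succ_pos k)
          _ = t ^ (k + 1) := by rw [norm_neg]
      have h2 : acoef (k + 1) * ‖(-Y) ^ (k + 1)‖ ≤ acoef (k + 1) * t ^ (k + 1) :=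
        mul_le_mul_of_nonneg_left h1 (acoef_nonneg _)
      have h3 : (1:ℝ) ≤ max 1 ‖(1:B)‖ := le_max_left _ _
      nlinarith [hnn (k + 1), norm_nonneg ((-Y) ^ (k + 1))]
  have goal1 : Summable fun j : ℕ => ‖((dcoef j / (j.factorial : ℝ) : ℝ) : ℂ) • (-Y) ^ j‖ :=
    Summable.of_nonneg_of_le (fun j => norm_nonneg _) hbound
      (hsum_t.mul_right (max 1 ‖(1 : B)‖))
  have hv : Summable fun j : ℕ => ((dcoef j / (j.factorial : ℝ) : ℝ) : ℂ) • (-Y) ^ j :=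
    goal1.of_norm
  have hXs : X = ∑' j : ℕ, S * (((dcoef j / (j.factorial : ℝ) : ℝ) : ℂ) • (-Y) ^ j) := by
    rw [hX, ← hv.tsum_mul_left S]
  have hb2 : ∀ j : ℕ, ‖S * (((dcoef j / (j.factorial : ℝ) : ℝ) : ℂ) • (-Y) ^ j)‖
      ≤ (acoef j * t ^ j) * ‖S‖ := by
    intro j
    rw [mul_smul_comm, norm_smul, habs]
    cases j with
    | zero =>
      rw [pow_zero, mul_one, acoef_zero, pow_zero]
      norm_num
    | succ k =>
      have h1 : ‖S * (-Y) ^ (k + 1)‖ ≤ ‖S‖ * t ^ (k + 1) := by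
        calc ‖S * (-Y) ^ (k + 1)‖ ≤ ‖S‖ * ‖(-Y) ^ (k + 1)‖ := norm_mul_le _ _
          _ ≤ ‖S‖ * ‖-Y‖ ^ (k + 1) :=
              mul_le_mul_of_nonneg_left (norm_pow_le' (-Y) (Nat.succ_pos k)) (norm_nonneg S)
          _ = ‖S‖ * t ^ (k + 1) := by rw [norm_neg]
      have h2 := acoef_nonneg (k + 1)
      nlinarith [norm_nonneg (S * (-Y) ^ (k + 1))]
  have hs2 : Summable fun j : ℕ =>
      ‖S * (((dcoef j / (j.factorial : ℝ) : ℝ) : ℂ) • (-Y) ^ j)‖ :=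
    Summable.of_nonneg_of_le (fun j => norm_nonneg _) hb2 (hsum_t.mul_right ‖S‖)
  have hXnorm : ‖X‖ ≤ P * ‖S‖ := by
    rw [hXs]
    calc ‖∑' j : ℕ, S * (((dcoef j / (j.factorial : ℝ) : ℝ) : ℂ) • (-Y) ^ j)‖
        ≤ ∑' j : ℕ, ‖S * (((dcoef j / (j.factorial : ℝ) : ℝ) : ℂ) • (-Y) ^ j)‖ :=
          norm_tsum_le_tsum_norm hs2
      _ ≤ ∑' j : ℕ, (acoef j * t ^ j) * ‖S‖ :=
          Summable.tsum_le_tsum hb2 hs2 (hsum_t.mul_right ‖S‖)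
      _ = P * ‖S‖ := by rw [tsum_mul_right]
  refine ⟨goal1, max_le ?_ ?_⟩
  · have hA : ‖A‖ ≤ ‖S‖ ^ 2 := by
      rw [← hS]
      exact norm_pow_le' S (by norm_num)
    calc Real.sqrt ‖A‖ ≤ Real.sqrt (‖S‖ ^ 2) := Real.sqrt_le_sqrt hA
      _ = ‖S‖ := Real.sqrt_sq (norm_nonneg S)
  · have hst : Real.sqrt (1 - t) ≤ 1 := by
      have h1 : (1:ℝ) - t ≤ 1 := by linarith
      calc Real.sqrt (1 - t) ≤ Real.sqrt 1 := Real.sqrt_le_sqrt h1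
        _ = 1 := Real.sqrt_one
    have hpos : 0 < 2 - Real.sqrt (1 - t) := by linarith
    rw [div_le_iff₀ hpos]
    calc ‖X‖ ≤ P * ‖S‖ := hXnorm
      _ = ‖S‖ * (2 - Real.sqrt (1 - t)) := by rw [hsqrt]; ring
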